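/- Let G be a k-regular k-connected finite simple graph with k ≥ 5 and order N, and let l = l(G) be the maximum number of common neighbors over adjacent pairs of vertices of G. Suppose that: (1) N ≥ 4k − 2; (2) every two distinct vertices of G have at most 2 common neighbors; (3) for every U ⊆ V(G) with 2 ≤ |U| ≤ 2(2k − 4 − l), one has |N_G(U)| ≥ 2k − 2 − l; and (4) for every vertex cut F ⊆ V(G) with |F| ≤ 2k − 3 − l, the graph G − F has exactly two components, one of which is a trivial component. Then the 1-extra connectivity satisfies κ₁(G) = 2k − 2 − l. -/

import Mathlib

open SimpleGraph

/-- The neighborhood of a vertex set `U` in `G`: all vertices outside `U`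
adjacent to at least one vertex of `U`. -/
def setNbhd {V : Type*} (G : SimpleGraph V) (U : Set V) : Set V :=
  {v | v ∉ U ∧ ∃ u ∈ U, G.Adj u v}

/-- `F` is a vertex cut of `G`: deleting `F` from `G` leaves a disconnected graph. -/
def IsVertexCut {V : Type*} (G : SimpleGraph V) (F : Set V) : Prop :=
  ¬ (G.induce (Fᶜ : Set V)).Preconnected

/-- `S` is a 1-extra vertex cut of `G`: `G − S` is disconnected and every
connected component of `G − S` has at least 2 vertices. -/
def IsOneExtraCut {V : Type*} (G : SimpleGraph V) (S : Set V) : Prop :=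
  ¬ (G.induce (Sᶜ : Set V)).Preconnected ∧
    ∀ C : (G.induce (Sᶜ : Set V)).ConnectedComponent, 2 ≤ C.supp.ncard

/-- The 1-extra connectivity `κ₁(G)`: the minimum cardinality of a 1-extra vertex cut. -/
noncomputable def extraConn1 {V : Type*} (G : SimpleGraph V) : ℕ :=
  sInf {m | ∃ S : Set V, IsOneExtraCut G S ∧ S.ncard = m}

/-- `G` is `t/t`-diagnosable: for every `S ⊆ V(G)` with `|S| = p` and `0 ≤ p ≤ t − 1`,
`G − S` has at most one trivial component (a component with exactly one vertex) and
every nontrivial component `C` of `G − S` satisfies `|V(C)| ≥ 2(t−p)+1`. -/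
def PessDiag {V : Type*} (G : SimpleGraph V) (t : ℕ) : Prop :=
  ∀ S : Set V, S.ncard < t →
    ({C : (G.induce (Sᶜ : Set V)).ConnectedComponent | C.supp.ncard = 1}.Subsingleton ∧
      ∀ C : (G.induce (Sᶜ : Set V)).ConnectedComponent, 2 ≤ C.supp.ncard →
        2 * (t - S.ncard) + 1 ≤ C.supp.ncard)

/-- The pessimistic diagnosability `t_p(G)`: the maximum `t` such that `G` is
`t/t`-diagnosable. -/
noncomputable def pessDiagnosability {V : Type*} (G : SimpleGraph V) : ℕ :=
  sSup {t | PessDiag G t}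

/-- `l(G)`: the maximum number of common neighbors over adjacent pairs of vertices. -/
noncomputable def maxAdjCommon {V : Type*} (G : SimpleGraph V) : ℕ :=
  sSup {m | ∃ u v : V, G.Adj u v ∧ (G.neighborSet u ∩ G.neighborSet v).ncard = m}

/-- `G` is `k`-connected: every vertex cut has at least `k` vertices and `|V(G)| > k`. -/
def KConnected {V : Type*} [Fintype V] (G : SimpleGraph V) (k : ℕ) : Prop :=
  k < Fintype.card V ∧ ∀ F : Set V, IsVertexCut G F → k ≤ F.ncard


/-- Walks in the induced graph on `Sᶜ` starting in a set `T` all of whose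
`G`-neighbors lie in `S ∪ T` stay inside `T`. -/
lemma walk_closed {V : Type*} {G : SimpleGraph V} {S T : Set V}
    (hT : ∀ x ∈ T, ∀ y : V, G.Adj x y → y ∈ S ∨ y ∈ T) :
    ∀ {a b : ↥(Sᶜ : Set V)}, (G.induce (Sᶜ : Set V)).Walk a b → (a : V) ∈ T → (b : V) ∈ T := by
  intro a b p
  induction p with
  | nil => exact id
  | @cons a c b h p ih =>
    intro ha
    apply ih
    rcases hT _ ha _ h with hy | hy
    · exact absurd hy c.2
    · exact hy


/-- Under the hypotheses of the main theorem, the 1-extra connectivity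
of `G` equals `2k − 2 − l`. -/
theorem extraConn_eq {V : Type*} [Fintype V] (G : SimpleGraph V) (k : ℕ) (hk : 5 ≤ k)
    (hreg : ∀ v : V, (G.neighborSet v).ncard = k)
    (hconn : KConnected G k)
    (h1 : 4 * k - 2 ≤ Fintype.card V)
    (h2 : ∀ u v : V, u ≠ v → (G.neighborSet u ∩ G.neighborSet v).ncard ≤ 2)
    (h3 : ∀ U : Set V, 2 ≤ U.ncard → U.ncard ≤ 2 * (2 * k - 4 - maxAdjCommon G) →
      2 * k - 2 - maxAdjCommon G ≤ (setNbhd G U).ncard)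
    (h4 : ∀ F : Set V, IsVertexCut G F → F.ncard ≤ 2 * k - 3 - maxAdjCommon G →
      ∃ C₀ C₁ : (G.induce (Fᶜ : Set V)).ConnectedComponent, C₀ ≠ C₁ ∧
        C₀.supp.ncard = 1 ∧ ∀ C, C = C₀ ∨ C = C₁) :
    extraConn1 G = 2 * k - 2 - maxAdjCommon G := by
  set l := maxAdjCommon G with hl
  -- G is preconnected
  have hpre : G.Preconnected := by
    by_contra h
    have hcut : IsVertexCut G ∅ := by
      unfold IsVertexCut
      rw [Set.compl_empty]
      exact fun hp => h ((Iso.preconnected_iff (induceUnivIso G)).mp hp)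
    have := hconn.2 ∅ hcut
    simp [Set.ncard_empty] at this
    omega
  -- G has an edge
  have hcard : 5 < Fintype.card V := lt_of_le_of_lt hk hconn.1
  have hedge : ∃ u v : V, G.Adj u v := by
    have : Nontrivial V := Fintype.one_lt_card_iff_nontrivial.mp (by omega)
    obtain ⟨a, b, hab⟩ := this
    obtain ⟨p⟩ := hpre a b
    cases p with
    | nil => exact absurd rfl hab
    | cons h _ => exact ⟨_, _, h⟩
  -- the set defining l
  have hMbdd : ∀ m ∈ {m | ∃ u v : V, G.Adj u v ∧ (G.neighborSet u ∩ G.neighborSet v).ncard = m},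
      m ≤ 2 := by
    rintro m ⟨u, v, huv, rfl⟩
    exact h2 u v huv.ne
  have hMne : {m | ∃ u v : V, G.Adj u v ∧ (G.neighborSet u ∩ G.neighborSet v).ncard = m}.Nonempty := by
    obtain ⟨u, v, huv⟩ := hedge
    exact ⟨_, u, v, huv, rfl⟩
  have hlmem : ∃ u v : V, G.Adj u v ∧ (G.neighborSet u ∩ G.neighborSet v).ncard = l := by
    have := Nat.sSup_mem hMne ⟨2, fun m hm => hMbdd m hm⟩
    exact this
  have hl2 : l ≤ 2 := csSup_le hMne hMbdd
  obtain ⟨u, v, huv, hluv⟩ := hlmem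
  -- the extremal cut
  set S : Set V := (G.neighborSet u ∪ G.neighborSet v) \ {u, v} with hSdef
  have huS : u ∉ S := fun h => h.2 (Or.inl rfl)
  have hvS : v ∉ S := fun h => h.2 (Or.inr rfl)
  have hScard : S.ncard = 2 * k - 2 - l := by
    have hsub : ({u, v} : Set V) ⊆ G.neighborSet u ∪ G.neighborSet v := by
      rintro x (rfl | rfl)
      · exact Or.inr (huv.symm)
      · exact Or.inl huv
    have hunion : (G.neighborSet u ∪ G.neighborSet v).ncard + l = 2 * k := by
      have := Set.ncard_union_add_ncard_inter (G.neighborSet u) (G.neighborSet v)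
      rw [hluv, hreg u, hreg v] at this
      omega
    rw [hSdef, Set.ncard_diff hsub, Set.ncard_pair huv.ne]
    omega
  -- neighbors of u and v outside {u,v} are in S
  have hclosed : ∀ x ∈ ({u, v} : Set V), ∀ y : V, G.Adj x y → y ∈ S ∨ y ∈ ({u, v} : Set V) := by
    rintro x hx y hxy
    by_cases hy : y ∈ ({u, v} : Set V)
    · exact Or.inr hy
    · refine Or.inl ⟨?_, hy⟩
      rcases hx with rfl | rfl
      · exact Or.inl hxy
      · exact Or.inr hxy
  have huc : u ∈ (Sᶜ : Set V) := huS
  have hvc : v ∈ (Sᶜ : Set V) := hvS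
  -- a vertex outside S ∪ {u,v}
  have hw : ∃ w : V, w ∉ S ∧ w ≠ u ∧ w ≠ v := by
    by_contra hcon
    push_neg at hcon
    have hsub : (Set.univ : Set V) ⊆ S ∪ {u, v} := by
      intro x _
      by_cases hx : x ∈ S
      · exact Or.inl hx
      · by_cases hxu : x = u
        · exact Or.inr (Or.inl hxu)
        · exact Or.inr (Or.inr (hcon x hx hxu))
    have h5 : (Set.univ : Set V).ncard ≤ S.ncard + 2 := by
      calc (Set.univ : Set V).ncard ≤ (S ∪ {u, v}).ncard := Set.ncard_le_ncard hsub
        _ ≤ S.ncard + ({u, v} : Set V).ncard := Set.ncard_union_le _ _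
        _ ≤ S.ncard + 2 := by
            have := Set.ncard_pair huv.ne
            omega
    rw [Set.ncard_univ, Nat.card_eq_fintype_card] at h5
    omega
  obtain ⟨w, hwS, hwu, hwv⟩ := hw
  -- S is disconnecting
  have hdisc : ¬ (G.induce (Sᶜ : Set V)).Preconnected := by
    intro hp
    obtain ⟨p⟩ := hp ⟨u, huc⟩ ⟨w, hwS⟩
    have := walk_closed hclosed p (Or.inl rfl)
    rcases this with h | h
    · exact hwu h
    · exact hwv h
  -- every component has at least 2 vertices
  have hcomp : ∀ C : (G.induce (Sᶜ : Set V)).ConnectedComponent, 2 ≤ C.supp.ncard := by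
    intro C
    obtain ⟨x, hx⟩ := C.exists_rep
    have hy : ∃ y : V, ∃ hy : y ∈ (Sᶜ : Set V), G.Adj ↑x y := by
      by_cases hxu : (x : V) = u
      · exact ⟨v, hvc, hxu ▸ huv⟩
      by_cases hxv : (x : V) = v
      · exact ⟨u, huc, hxv ▸ (huv.symm)⟩
      by_contra hcon
      push_neg at hcon
      have hnb : G.neighborSet (x : V) ⊆
          (G.neighborSet (x : V) ∩ G.neighborSet u) ∪ (G.neighborSet (x : V) ∩ G.neighborSet v) := by
        intro y hyx
        have hyS : y ∈ S := by
          by_contra hyS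
          exact hcon y hyS hyx
        rcases hyS.1 with h | h
        · exact Or.inl ⟨hyx, h⟩
        · exact Or.inr ⟨hyx, h⟩
      have hle : (G.neighborSet (x : V)).ncard ≤ 4 := by
        calc (G.neighborSet (x : V)).ncard
            ≤ ((G.neighborSet (x : V) ∩ G.neighborSet u) ∪
               (G.neighborSet (x : V) ∩ G.neighborSet v)).ncard := Set.ncard_le_ncard hnb
          _ ≤ (G.neighborSet (x : V) ∩ G.neighborSet u).ncard +
              (G.neighborSet (x : V) ∩ G.neighborSet v).ncard := Set.ncard_union_le _ _
          _ ≤ 2 + 2 := Nat.add_le_add (h2 _ _ hxu) (h2 _ _ hxv)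
      rw [hreg] at hle
      omega
    obtain ⟨y, hySc, hxy⟩ := hy
    have hadj : (G.induce (Sᶜ : Set V)).Adj x ⟨y, hySc⟩ := hxy
    have hne : x ≠ (⟨y, hySc⟩ : ↥(Sᶜ : Set V)) := by
      intro h
      exact G.irrefl (h ▸ hxy)
    have hxsupp : x ∈ C.supp := hx
    have hysupp : (⟨y, hySc⟩ : ↥(Sᶜ : Set V)) ∈ C.supp := by
      rw [SimpleGraph.ConnectedComponent.mem_supp_iff, ← hx]
      exact SimpleGraph.ConnectedComponent.sound hadj.symm.reachable
    have : 1 < C.supp.ncard := by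
      rw [Set.one_lt_ncard (Set.toFinite _)]
      exact ⟨x, hxsupp, _, hysupp, hne⟩
    omega
  -- membership
  have hmem : (2 * k - 2 - l) ∈ {m | ∃ S : Set V, IsOneExtraCut G S ∧ S.ncard = m} :=
    ⟨S, ⟨hdisc, hcomp⟩, hScard⟩
  -- lower bound
  have hlb : ∀ m ∈ {m | ∃ S : Set V, IsOneExtraCut G S ∧ S.ncard = m}, 2 * k - 2 - l ≤ m := by
    rintro m ⟨T, ⟨hTd, hTc⟩, rfl⟩
    by_contra hcon
    push_neg at hcon
    have hT : T.ncard ≤ 2 * k - 3 - l := by omega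
    obtain ⟨C₀, C₁, hne01, hC₀, hall⟩ := h4 T hTd hT
    have := hTc C₀
    omega
  exact le_antisymm (Nat.sInf_le hmem) (le_csInf ⟨_, hmem⟩ hlb)
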